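/- Let r ≥ 1 and n = 2r. Let k, j ∈ {1,…,r} be integers with k + j ≥ r + 2, let 0 < θ < π/(2r), let x > 0, and let φ ∈ ℝ satisfy |φ + π/2 − π/(2r)| < π/r − θ. Then Im( e^{2πi(k−1)/n} · x·e^{iφ} + e^{2πi(j−r)/n} · x·e^{−iφ} ) ≥ 2 · sin((k+j−r−1)·π/n) · sin θ · x. -/

import Mathlib

lemma real_sin_add_sin (a b : ℝ) :
    Real.sin a + Real.sin b = 2 * Real.sin ((a+b)/2) * Real.cos ((a-b)/2) := by
  have h1 := Real.sin_add ((a+b)/2) ((a-b)/2)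
  have h2 := Real.sin_sub ((a+b)/2) ((a-b)/2)
  have e1 : (a+b)/2 + (a-b)/2 = a := by ring
  have e2 : (a+b)/2 - (a-b)/2 = b := by ring
  rw [e1] at h1; rw [e2] at h2; linarith

set_option maxHeartbeats 1000000 in
/-- Lower bound for `Im(ξ_k·z + ζ_j·z̄)` on the sector `S_n(θ)` (case `n = 2r`):
for `k, j ∈ {1,…,r}` with `k + j ≥ r + 2`, `z = x·e^{iφ}` with
`|φ + π/2 − π/(2r)| < π/r − θ`, one has
`Im(e^{2πi(k-1)/n}·x·e^{iφ} + e^{2πi(j-r)/n}·x·e^{-iφ}) ≥ 2·sin((k+j-r-1)π/n)·sin θ·x`. -/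
theorem stmt_15 (r : ℕ) (hr : 1 ≤ r) (n : ℕ) (hn : n = 2 * r)
    (k j : ℕ) (hk1 : 1 ≤ k) (hkr : k ≤ r) (hj1 : 1 ≤ j) (hjr : j ≤ r)
    (hkj : r + 2 ≤ k + j)
    (θ : ℝ) (hθ1 : 0 < θ) (hθ2 : θ < Real.pi / (2 * r))
    (x : ℝ) (hx : 0 < x) (φ : ℝ)
    (hφ : |φ + Real.pi / 2 - Real.pi / (2 * r)| < Real.pi / r - θ) :
    2 * Real.sin (((k : ℝ) + j - r - 1) * Real.pi / n) * Real.sin θ * x ≤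
      (Complex.exp (2 * Real.pi * Complex.I * ((k : ℂ) - 1) / n) *
          (x * Complex.exp (Complex.I * φ)) +
        Complex.exp (2 * Real.pi * Complex.I * ((j : ℂ) - r) / n) *
          (x * Complex.exp (-(Complex.I * φ)))).im := by
  have hr2 : 2 ≤ r := by omega
  have hrR : (0:ℝ) < r := by exact_mod_cast Nat.pos_of_ne_zero (by omega)
  have hπ := Real.pi_pos
  have hnR : (0:ℝ) < n := by
    have : 0 < n := by omega
    exact_mod_cast this
  have hnne : (n:ℝ) ≠ 0 := ne_of_gt hnR
  set t1 : ℝ := 2*Real.pi*((k:ℝ)-1)/n with ht1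
  set t2 : ℝ := 2*Real.pi*((j:ℝ)-(r:ℝ))/n with ht2
  have e1 : Complex.exp (2 * Real.pi * Complex.I * ((k : ℂ) - 1) / n) *
      (x * Complex.exp (Complex.I * φ)) = (x:ℂ) * Complex.exp (((t1+φ:ℝ):ℂ) * Complex.I) := by
    have h : (2 * Real.pi * Complex.I * ((k : ℂ) - 1) / n) + Complex.I * φ
        = ((t1+φ:ℝ):ℂ) * Complex.I := by
      rw [ht1]; push_cast; ring
    rw [← h, Complex.exp_add]; ring
  have e2 : Complex.exp (2 * Real.pi * Complex.I * ((j : ℂ) - r) / n) *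
      (x * Complex.exp (-(Complex.I * φ))) = (x:ℂ) * Complex.exp (((t2-φ:ℝ):ℂ) * Complex.I) := by
    have h : (2 * Real.pi * Complex.I * ((j : ℂ) - r) / n) + (-(Complex.I * φ))
        = ((t2-φ:ℝ):ℂ) * Complex.I := by
      rw [ht2]; push_cast; ring
    rw [← h, Complex.exp_add]; ring
  rw [e1, e2]
  have him : ((x:ℂ) * Complex.exp (((t1+φ:ℝ):ℂ) * Complex.I) +
      (x:ℂ) * Complex.exp (((t2-φ:ℝ):ℂ) * Complex.I)).im
      = x * Real.sin (t1+φ) + x * Real.sin (t2-φ) := by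
    simp only [Complex.add_im, Complex.mul_im, Complex.ofReal_re, Complex.ofReal_im,
      Complex.exp_ofReal_mul_I_im, Complex.exp_ofReal_mul_I_re]
    ring
  rw [him]
  have hsum : ((t1+φ) + (t2-φ))/2 = ((k:ℝ)+j-(r:ℝ)-1)*Real.pi/n := by
    rw [ht1, ht2]; field_simp; ring
  set ψ : ℝ := ((t1+φ) - (t2-φ))/2 with hψ
  have hsin2 : Real.sin (t1+φ) + Real.sin (t2-φ)
      = 2 * Real.sin (((k : ℝ) + j - r - 1) * Real.pi / n) * Real.cos ψ := by
    rw [real_sin_add_sin, hsum, hψ]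
  -- cast facts
  have hkR : (k:ℝ) ≤ r := by exact_mod_cast hkr
  have hjR : (j:ℝ) ≤ r := by exact_mod_cast hjr
  have hkjR : (r:ℝ) + 2 ≤ (k:ℝ) + j := by exact_mod_cast hkj
  have hk2 : (2:ℝ) ≤ k := by linarith
  have hj2 : (2:ℝ) ≤ j := by linarith
  -- sin positive
  have hS : 0 < Real.sin (((k : ℝ) + j - r - 1) * Real.pi / n) := by
    apply Real.sin_pos_of_pos_of_lt_pi
    · apply div_pos _ hnR
      have : (1:ℝ) ≤ (k:ℝ)+j-r-1 := by linarith
      nlinarith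
    · rw [div_lt_iff₀ hnR]
      have hnr : (n:ℝ) = 2*r := by exact_mod_cast hn
      nlinarith
  -- bound on ψ
  have hψeq : ψ = (φ + Real.pi/2 - Real.pi/(2*r)) + ((k:ℝ)-j)*Real.pi/(2*r) := by
    rw [hψ, ht1, ht2]
    have hnr : (n:ℝ) = 2*r := by exact_mod_cast hn
    rw [hnr]
    field_simp
    ring
  have habsd : |(k:ℝ)-j| ≤ (r:ℝ)-2 := by
    rw [abs_le]; constructor <;> linarith
  have hpos2r : (0:ℝ) < Real.pi/(2*r) := by positivity
  have habsψ : |ψ| ≤ Real.pi/2 - θ := by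
    rw [hψeq]
    calc |(φ + Real.pi/2 - Real.pi/(2*r)) + ((k:ℝ)-j)*Real.pi/(2*r)|
        ≤ |φ + Real.pi/2 - Real.pi/(2*r)| + |((k:ℝ)-j)*Real.pi/(2*r)| := abs_add_le _ _
      _ ≤ |φ + Real.pi/2 - Real.pi/(2*r)| + ((r:ℝ)-2)*(Real.pi/(2*r)) := by
          have : |((k:ℝ)-j)*Real.pi/(2*r)| = |(k:ℝ)-j| * (Real.pi/(2*r)) := by
            rw [mul_div_assoc, abs_mul, abs_of_pos hpos2r]
          rw [this]
          have := mul_le_mul_of_nonneg_right habsd (le_of_lt hpos2r)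
          linarith
      _ ≤ Real.pi/2 - θ := by
          have h1 : ((r:ℝ)-2)*(Real.pi/(2*r)) = Real.pi/2 - Real.pi/r := by
            field_simp
          rw [h1]; linarith [le_of_lt hφ]
  have hcos : Real.sin θ ≤ Real.cos ψ := by
    have h1 : Real.cos (Real.pi/2 - θ) ≤ Real.cos |ψ| := by
      apply Real.cos_le_cos_of_nonneg_of_le_pi (abs_nonneg _) _ habsψ
      linarith
    rw [Real.cos_pi_div_two_sub, Real.cos_abs] at h1
    exact h1
  have hfin : Real.sin θ * (2 * Real.sin (((k : ℝ) + j - r - 1) * Real.pi / n) * x)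
      ≤ Real.cos ψ * (2 * Real.sin (((k : ℝ) + j - r - 1) * Real.pi / n) * x) := by
    apply mul_le_mul_of_nonneg_right hcos
    positivity
  nlinarith [hfin, hsin2]
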